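/- For any separable real Banach space X, R(X) ≤ 1 + 1/(1 + r_{X*}(1)), where r_{X*} is Opial's modulus of the dual X* (defined with weak* null sequences). -/

import Mathlib

open Filter Topology

variable {X : Type*} [NormedAddCommGroup X] [NormedSpace ℝ X]

/-- `x` is a weakly null sequence in `X`. -/
def WeakNull {X : Type*} [NormedAddCommGroup X] [NormedSpace ℝ X] (x : ℕ → X) : Prop :=
  ∀ f : X →L[ℝ] ℝ, Tendsto (fun n => f (x n)) atTop (nhds 0)

/-- `f` converges to `g` in the weak* topology of the dual. -/
def WeakStarTendsto {X : Type*} [NormedAddCommGroup X] [NormedSpace ℝ X]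
    (f : ℕ → X →L[ℝ] ℝ) (g : X →L[ℝ] ℝ) : Prop :=
  ∀ v : X, Tendsto (fun n => f n v) atTop (nhds (g v))

/-- `f` is a weak*-null sequence in the dual. -/
def WeakStarNull {X : Type*} [NormedAddCommGroup X] [NormedSpace ℝ X]
    (f : ℕ → X →L[ℝ] ℝ) : Prop :=
  WeakStarTendsto f 0

/-- The coefficient `R(X)`. -/
noncomputable def RCoef (X : Type*) [NormedAddCommGroup X] [NormedSpace ℝ X] : ℝ :=
  sSup { r | ∃ (x : ℕ → X) (y : X), (∀ n, ‖x n‖ ≤ 1) ∧ WeakNull x ∧ ‖y‖ ≤ 1 ∧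
    r = Filter.liminf (fun n => ‖x n + y‖) atTop }

/-- Opial's modulus of `X`. -/
noncomputable def opialModulus (X : Type*) [NormedAddCommGroup X] [NormedSpace ℝ X] (c : ℝ) : ℝ :=
  sInf { r | ∃ (x : ℕ → X) (y : X), c ≤ ‖y‖ ∧ WeakNull x ∧
    1 ≤ Filter.liminf (fun n => ‖x n‖) atTop ∧
    r = Filter.liminf (fun n => ‖x n - y‖) atTop - 1 }

/-- Opial's modulus of the dual `X*`, with respect to weak*-null sequences. -/
noncomputable def opialModulusStar (X : Type*) [NormedAddCommGroup X] [NormedSpace ℝ X] (c : ℝ) : ℝ :=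
  sInf { r | ∃ (f : ℕ → X →L[ℝ] ℝ) (g : X →L[ℝ] ℝ), c ≤ ‖g‖ ∧ WeakStarNull f ∧
    1 ≤ Filter.liminf (fun n => ‖f n‖) atTop ∧
    r = Filter.liminf (fun n => ‖f n - g‖) atTop - 1 }

/-- Property(K) for `X`. -/
def PropertyK (X : Type*) [NormedAddCommGroup X] [NormedSpace ℝ X] : Prop :=
  ∃ K, 0 ≤ K ∧ K < 1 ∧ ∀ (x : ℕ → X) (y : X),
    WeakNull x → Tendsto (fun n => ‖x n‖) atTop (nhds 1) →
    Filter.liminf (fun n => ‖x n - y‖) atTop ≤ 1 → ‖y‖ ≤ K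

/-- Property(K*) for the dual `X*`. -/
def PropertyKStar (X : Type*) [NormedAddCommGroup X] [NormedSpace ℝ X] : Prop :=
  ∃ K, 0 ≤ K ∧ K < 1 ∧ ∀ (f : ℕ → X →L[ℝ] ℝ) (g : X →L[ℝ] ℝ),
    (∀ n, ‖f n‖ ≤ 1) → WeakStarNull f →
    Tendsto (fun n => ‖f n‖) atTop (nhds 1) →
    Filter.liminf (fun n => ‖f n - g‖) atTop ≤ 1 → ‖g‖ ≤ K

section Helpers

variable {X : Type*} [NormedAddCommGroup X] [NormedSpace ℝ X]

lemma myBddLe (u : ℕ → ℝ) (C : ℝ) (h : ∀ n, u n ≤ C) :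
    IsBoundedUnder (· ≤ ·) atTop u := isBoundedUnder_of ⟨C, h⟩

lemma myBddGe (u : ℕ → ℝ) (C : ℝ) (h : ∀ n, C ≤ u n) :
    IsBoundedUnder (· ≥ ·) atTop u := isBoundedUnder_of ⟨C, h⟩

lemma myCoboundedGe (u : ℕ → ℝ) (C : ℝ) (h : ∀ n, u n ≤ C) :
    IsCoboundedUnder (· ≥ ·) atTop u :=
  (myBddLe u C h).isCoboundedUnder_ge

lemma my_liminf_const_mul (u : ℕ → ℝ) (c C : ℝ) (hc : 0 ≤ c)
    (h0 : ∀ n, 0 ≤ u n) (hC : ∀ n, u n ≤ C) :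
    Filter.liminf (fun n => c * u n) atTop = c * Filter.liminf u atTop := by
  have hmono : Monotone (fun x : ℝ => c * x) := fun a b hab => mul_le_mul_of_nonneg_left hab hc
  exact (hmono.map_liminf_of_continuousAt (F := atTop) u
    (continuous_const.mul continuous_id).continuousAt (myCoboundedGe u C hC) (myBddGe u 0 h0)).symm

lemma dual_norm_le_liminf (F : ℕ → X →L[ℝ] ℝ) (H : X →L[ℝ] ℝ) (C : ℝ)
    (hC : ∀ n, ‖F n‖ ≤ C)
    (h : ∀ v, Tendsto (fun n => F n v) atTop (𝓝 (H v))) :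
    ‖H‖ ≤ Filter.liminf (fun n => ‖F n‖) atTop := by
  have hL0 : (0:ℝ) ≤ Filter.liminf (fun n => ‖F n‖) atTop :=
    le_liminf_of_le (myCoboundedGe _ C hC) (Eventually.of_forall fun n => norm_nonneg _)
  refine H.opNorm_le_bound hL0 fun v => ?_
  have h1 : Tendsto (fun n => ‖F n v‖) atTop (𝓝 ‖H v‖) := (h v).norm
  have h2 : Filter.liminf (fun n => ‖F n v‖) atTop = ‖H v‖ := h1.liminf_eq
  rw [← h2]
  have h3 : Filter.liminf (fun n => ‖F n‖ * ‖v‖) atTop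
      = Filter.liminf (fun n => ‖F n‖) atTop * ‖v‖ := by
    have := my_liminf_const_mul (fun n => ‖F n‖) ‖v‖ C (norm_nonneg v)
      (fun n => norm_nonneg _) hC
    calc Filter.liminf (fun n => ‖F n‖ * ‖v‖) atTop
        = Filter.liminf (fun n => ‖v‖ * ‖F n‖) atTop := by simp [mul_comm]
      _ = ‖v‖ * Filter.liminf (fun n => ‖F n‖) atTop := this
      _ = _ := mul_comm _ _
  rw [← h3]
  refine liminf_le_liminf (Eventually.of_forall fun n => (F n).le_opNorm v)
    (myBddGe _ 0 fun n => norm_nonneg _)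
    (myCoboundedGe _ (C * ‖v‖) fun n =>
      mul_le_mul_of_nonneg_right (hC n) (norm_nonneg v))

lemma weakstar_bounded [CompleteSpace X] (F : ℕ → X →L[ℝ] ℝ)
    (h : ∀ v, ∃ a : ℝ, Tendsto (fun n => F n v) atTop (𝓝 a)) :
    ∃ C, ∀ n, ‖F n‖ ≤ C := by
  apply banach_steinhaus
  intro v
  obtain ⟨a, ha⟩ := h v
  obtain ⟨C, hC⟩ := ha.norm.bddAbove_range
  exact ⟨C, fun n => hC (Set.mem_range_self n)⟩

lemma exists_weakstar_subseq [CompleteSpace X] [TopologicalSpace.SeparableSpace X]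
    (f : ℕ → X →L[ℝ] ℝ) (hf : ∀ n, ‖f n‖ ≤ 1) :
    ∃ (φ : ℕ → ℕ) (F : X →L[ℝ] ℝ), StrictMono φ ∧
      ∀ v, Tendsto (fun n => f (φ n) v) atTop (𝓝 (F v)) := by
  haveI : Nonempty X := ⟨0⟩
  set u : ℕ → X := TopologicalSpace.denseSeq X with hu_def
  have hu : DenseRange u := TopologicalSpace.denseRange_denseSeq X
  set S : Set (ℕ → ℝ) := Set.pi Set.univ (fun k => Set.Icc (-‖u k‖) ‖u k‖) with hS_def
  have hScomp : IsCompact S := isCompact_univ_pi fun k => isCompact_Icc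
  have hmem : ∀ n, (fun k => f n (u k)) ∈ S := by
    intro n k _
    have := (f n).le_opNorm (u k)
    have h2 : ‖f n (u k)‖ ≤ ‖u k‖ := le_trans this (by
      calc ‖f n‖ * ‖u k‖ ≤ 1 * ‖u k‖ := mul_le_mul_of_nonneg_right (hf n) (norm_nonneg _)
        _ = ‖u k‖ := one_mul _)
    rw [Real.norm_eq_abs, abs_le] at h2
    exact ⟨h2.1, h2.2⟩
  obtain ⟨L, _, φ, hφ, hconv⟩ := hScomp.isSeqCompact hmem
  have hk : ∀ k, Tendsto (fun n => f (φ n) (u k)) atTop (𝓝 (L k)) := by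
    intro k
    exact (tendsto_pi_nhds.1 hconv) k
  have hcauchy : ∀ v : X, CauchySeq (fun n => f (φ n) v) := by
    intro v
    rw [Metric.cauchySeq_iff]
    intro ε hε
    obtain ⟨k, hk4⟩ := hu.exists_dist_lt v (show (0:ℝ) < ε/4 by linarith)
    obtain ⟨N, hN⟩ := Metric.cauchySeq_iff.1 (hk k).cauchySeq (ε/4) (by linarith)
    refine ⟨N, fun m hm n hn => ?_⟩
    have key : ∀ j, |f (φ j) v - f (φ j) (u k)| ≤ ε/4 := by
      intro j
      have heq : f (φ j) v - f (φ j) (u k) = f (φ j) (v - u k) := by rw [map_sub]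
      rw [heq]
      have h1 : ‖f (φ j) (v - u k)‖ ≤ ‖f (φ j)‖ * ‖v - u k‖ := (f (φ j)).le_opNorm _
      have h2 : ‖v - u k‖ < ε/4 := by rwa [← dist_eq_norm]
      have h3 : ‖f (φ j)‖ * ‖v - u k‖ ≤ 1 * ‖v - u k‖ :=
        mul_le_mul_of_nonneg_right (hf _) (norm_nonneg _)
      calc |f (φ j) (v - u k)| = ‖f (φ j) (v - u k)‖ := rfl
        _ ≤ ‖f (φ j)‖ * ‖v - u k‖ := h1
        _ ≤ 1 * ‖v - u k‖ := h3
        _ = ‖v - u k‖ := one_mul _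
        _ ≤ ε/4 := h2.le
    have hmn := hN m hm n hn
    rw [Real.dist_eq] at hmn ⊢
    have heq : f (φ m) v - f (φ n) v =
        (f (φ m) v - f (φ m) (u k)) + (f (φ m) (u k) - f (φ n) (u k))
        + (f (φ n) (u k) - f (φ n) v) := by ring
    rw [heq]
    calc |_ + _ + _| ≤ |(f (φ m) v - f (φ m) (u k)) + (f (φ m) (u k) - f (φ n) (u k))|
          + |f (φ n) (u k) - f (φ n) v| := abs_add_le _ _
      _ ≤ |f (φ m) v - f (φ m) (u k)| + |f (φ m) (u k) - f (φ n) (u k)|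
          + |f (φ n) (u k) - f (φ n) v| := by
            have := abs_add_le (f (φ m) v - f (φ m) (u k)) (f (φ m) (u k) - f (φ n) (u k))
            linarith
      _ < ε/4 + ε/4 + ε/4 := by
            have h1 := key m
            have h2 := key n
            have h3 : |f (φ n) (u k) - f (φ n) v| = |f (φ n) v - f (φ n) (u k)| :=
              abs_sub_comm _ _
            rw [h3]
            linarith
      _ < ε := by linarith
  have hlim : ∀ v : X, ∃ a : ℝ, Tendsto (fun n => f (φ n) v) atTop (𝓝 a) :=
    fun v => cauchySeq_tendsto_of_complete (hcauchy v)
  choose Fl hFl using hlim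
  have htends : Tendsto (fun n v => f (φ n) v) atTop (𝓝 Fl) := tendsto_pi_nhds.2 hFl
  exact ⟨φ, continuousLinearMapOfTendsto (fun n => f (φ n)) htends, hφ, fun v => hFl v⟩

lemma opial_set_nonneg [CompleteSpace X] :
    ∀ r ∈ { r : ℝ | ∃ (f : ℕ → X →L[ℝ] ℝ) (g : X →L[ℝ] ℝ), (1:ℝ) ≤ ‖g‖ ∧ WeakStarNull f ∧
      1 ≤ Filter.liminf (fun n => ‖f n‖) atTop ∧
      r = Filter.liminf (fun n => ‖f n - g‖) atTop - 1 }, 0 ≤ r := by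
  rintro r ⟨F, G, hG, hFnull, -, rfl⟩
  have h0 : ∀ v, Tendsto (fun n => F n v) atTop (𝓝 0) := by
    intro v; simpa using hFnull v
  obtain ⟨C, hC⟩ := weakstar_bounded F (fun v => ⟨0, h0 v⟩)
  have hC' : ∀ n, ‖F n - G‖ ≤ C + ‖G‖ := fun n =>
    (norm_sub_le _ _).trans (add_le_add (hC n) le_rfl)
  have hconv : ∀ v, Tendsto (fun n => (F n - G) v) atTop (𝓝 ((-G) v)) := by
    intro v
    simp only [ContinuousLinearMap.sub_apply, ContinuousLinearMap.neg_apply]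
    simpa using (h0 v).sub tendsto_const_nhds
  have := dual_norm_le_liminf (fun n => F n - G) (-G) (C + ‖G‖) hC' hconv
  rw [norm_neg] at this
  linarith

end Helpers

section Main

variable {X : Type*} [NormedAddCommGroup X] [NormedSpace ℝ X]

lemma key_bound [CompleteSpace X] [TopologicalSpace.SeparableSpace X]
    (x : ℕ → X) (y : X) (hx1 : ∀ n, ‖x n‖ ≤ 1) (hxw : WeakNull x) (hy : ‖y‖ ≤ 1) :
    Filter.liminf (fun n => ‖x n + y‖) atTop ≤ 1 + 1 / (1 + opialModulusStar X 1) := by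
  set ρ := opialModulusStar X 1 with hρ_def
  have hρ0 : 0 ≤ ρ := Real.sInf_nonneg opial_set_nonneg
  have h1ρ : (0:ℝ) < 1 + ρ := by linarith
  have hfrac0 : (0:ℝ) ≤ 1 / (1 + ρ) := by positivity
  set A := Filter.liminf (fun n => ‖x n + y‖) atTop with hA_def
  by_cases hA1 : A ≤ 1
  · linarith
  have hA1' : 1 < A := not_le.1 hA1
  -- norming functionals
  choose f₀ hf₀a hf₀b using fun n => exists_dual_vector'' ℝ (x n + y)
  obtain ⟨φ, f, hφ, hconv⟩ := exists_weakstar_subseq f₀ hf₀a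
  have hφt : Tendsto φ atTop atTop := hφ.tendsto_atTop
  have hf1 : ‖f‖ ≤ 1 := by
    refine f.opNorm_le_bound zero_le_one fun v => ?_
    rw [one_mul]
    refine le_of_tendsto (hconv v).norm (Eventually.of_forall fun n => ?_)
    calc ‖f₀ (φ n) v‖ ≤ ‖f₀ (φ n)‖ * ‖v‖ := (f₀ (φ n)).le_opNorm v
      _ ≤ 1 * ‖v‖ := mul_le_mul_of_nonneg_right (hf₀a _) (norm_nonneg _)
      _ = ‖v‖ := one_mul _
  set b : ℕ → ℝ := fun n => ‖x (φ n) + y‖ with hb_def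
  have hb0 : ∀ n, 0 ≤ b n := fun n => norm_nonneg _
  have hb2 : ∀ n, b n ≤ 2 := fun n => by
    calc b n ≤ ‖x (φ n)‖ + ‖y‖ := norm_add_le _ _
      _ ≤ 1 + 1 := add_le_add (hx1 _) hy
      _ = 2 := by norm_num
  set A' := Filter.liminf b atTop with hA'_def
  have hAA' : A ≤ A' := by
    have hmap : Filter.liminf (fun n => ‖x n + y‖) (Filter.map φ atTop) = A' := by
      unfold Filter.liminf
      rw [Filter.map_map]
      rfl
    rw [← hmap]
    refine liminf_le_liminf_of_le hφt (myBddGe _ 0 fun n => norm_nonneg _) ?_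
    exact (isBoundedUnder_of (α := ℝ) ⟨2, fun n => by
      calc ‖x n + y‖ ≤ ‖x n‖ + ‖y‖ := norm_add_le _ _
        _ ≤ 2 := by linarith [hx1 n]⟩ :
        IsBoundedUnder (· ≤ ·) (Filter.map φ atTop) _).isCoboundedUnder_ge
  have hA'1 : 1 < A' := lt_of_lt_of_le hA1' hAA'
  set f' : ℕ → X →L[ℝ] ℝ := fun n => f₀ (φ n) with hf'_def
  have hf'1 : ∀ n, ‖f' n‖ ≤ 1 := fun n => hf₀a _
  have hf'b : ∀ n, f' n (x (φ n) + y) = b n := fun n => hf₀b _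
  have hfy_le : f y ≤ ‖f‖ := by
    calc f y ≤ |f y| := le_abs_self _
      _ = ‖f y‖ := rfl
      _ ≤ ‖f‖ * ‖y‖ := f.le_opNorm y
      _ ≤ ‖f‖ * 1 := mul_le_mul_of_nonneg_left hy (norm_nonneg _)
      _ = ‖f‖ := mul_one _
  have hfy1 : f y ≤ 1 := hfy_le.trans hf1
  have hA'fy : A' ≤ f y + 1 := by
    have hpt : ∀ n, b n ≤ f' n y + 1 := by
      intro n
      have h1 : f' n (x (φ n)) ≤ 1 := by
        calc f' n (x (φ n)) ≤ |f' n (x (φ n))| := le_abs_self _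
          _ = ‖f' n (x (φ n))‖ := rfl
          _ ≤ ‖f' n‖ * ‖x (φ n)‖ := (f' n).le_opNorm _
          _ ≤ 1 * 1 := mul_le_mul (hf'1 n) (hx1 _) (norm_nonneg _) zero_le_one
          _ = 1 := one_mul _
      have h2 : b n = f' n (x (φ n)) + f' n y := by
        rw [← map_add]; exact (hf'b n).symm
      linarith
    have h3 : Filter.liminf b atTop ≤ Filter.liminf (fun n => f' n y + 1) atTop :=
      liminf_le_liminf (Eventually.of_forall hpt) (myBddGe _ 0 hb0)
        (myCoboundedGe _ 2 fun n => by
          have : f' n y ≤ 1 := by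
            calc f' n y ≤ |f' n y| := le_abs_self _
              _ = ‖f' n y‖ := rfl
              _ ≤ ‖f' n‖ * ‖y‖ := (f' n).le_opNorm _
              _ ≤ 1 * 1 := mul_le_mul (hf'1 n) hy (norm_nonneg _) zero_le_one
              _ = 1 := one_mul _
          linarith)
    have h4 : Filter.liminf (fun n => f' n y + 1) atTop = f y + 1 :=
      Filter.Tendsto.liminf_eq ((hconv y).add_const 1)
    rw [h4] at h3
    exact h3
  set g : ℕ → X →L[ℝ] ℝ := fun n => f' n - f with hg_def
  have hg2 : ∀ n, ‖g n‖ ≤ 2 := fun n => by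
    calc ‖g n‖ ≤ ‖f' n‖ + ‖f‖ := norm_sub_le _ _
      _ ≤ 1 + 1 := add_le_add (hf'1 n) hf1
      _ = 2 := by norm_num
  have hgnull : ∀ v, Tendsto (fun n => g n v) atTop (𝓝 0) := by
    intro v
    simp only [hg_def, ContinuousLinearMap.sub_apply]
    simpa using (hconv v).sub_const (f v)
  have hxφ : Tendsto (fun n => f (x (φ n))) atTop (𝓝 0) := (hxw f).comp hφt
  set D := A' - f y with hD_def
  have hfy_pos : 0 < f y := by linarith
  have hD_pos : 0 < D := by rw [hD_def]; linarith
  have hliminf_g : D ≤ Filter.liminf (fun n => ‖g n‖) atTop := by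
    set c : ℕ → ℝ := fun n => -(f' n y) - f (x (φ n)) with hc_def
    have hc : Tendsto c atTop (𝓝 (-(f y))) := by
      have := ((hconv y).neg.sub hxφ)
      simpa using this
    have hpt : ∀ n, b n + c n ≤ ‖g n‖ := by
      intro n
      have h2 : f' n (x (φ n)) = b n - f' n y := by
        have := hf'b n
        rw [map_add] at this
        linarith
      have h1 : g n (x (φ n)) = b n - f' n y - f (x (φ n)) := by
        calc g n (x (φ n)) = f' n (x (φ n)) - f (x (φ n)) := by
              simp [hg_def, ContinuousLinearMap.sub_apply]
          _ = b n - f' n y - f (x (φ n)) := by rw [h2]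
      have h3 : g n (x (φ n)) ≤ ‖g n‖ := by
        calc g n (x (φ n)) ≤ |g n (x (φ n))| := le_abs_self _
          _ = ‖g n (x (φ n))‖ := rfl
          _ ≤ ‖g n‖ * ‖x (φ n)‖ := (g n).le_opNorm _
          _ ≤ ‖g n‖ * 1 := mul_le_mul_of_nonneg_left (hx1 _) (norm_nonneg _)
          _ = ‖g n‖ := mul_one _
      rw [h1] at h3
      simp only [hc_def]
      linarith
    refine le_of_forall_sub_le fun ε hε => ?_
    have hev : ∀ᶠ n in atTop, -(f y) - ε < c n :=
      hc.eventually (eventually_gt_nhds (by linarith))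
    have h5 : Filter.liminf (fun n => b n + (-(f y) - ε)) atTop
        ≤ Filter.liminf (fun n => ‖g n‖) atTop := by
      refine liminf_le_liminf ?_ ?_ (myCoboundedGe _ 2 hg2)
      · filter_upwards [hev] with n hn
        have := hpt n
        linarith
      · exact myBddGe _ (-(f y) - ε) fun n => by linarith [hb0 n]
    have h6 : Filter.liminf (fun n => b n + (-(f y) - ε)) atTop = A' + (-(f y) - ε) :=
      liminf_add_const atTop b (-(f y) - ε) (myCoboundedGe _ 2 hb2) (myBddGe _ 0 hb0)
    rw [h6] at h5
    rw [hD_def]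
    linarith
  set t := min ‖f‖ D with ht_def
  have ht_pos : 0 < t := lt_min (by linarith) hD_pos
  have ht_inv_pos : (0:ℝ) < t⁻¹ := inv_pos.2 ht_pos
  -- the Opial modulus candidate
  set Fn : ℕ → X →L[ℝ] ℝ := fun n => t⁻¹ • g n with hFn_def
  set G : X →L[ℝ] ℝ := -(t⁻¹ • f) with hG_def
  have hnorm_smul : ∀ (h : X →L[ℝ] ℝ), ‖t⁻¹ • h‖ = t⁻¹ * ‖h‖ := fun h => by
    rw [norm_smul t⁻¹ h, Real.norm_eq_abs, abs_of_pos ht_inv_pos]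
  have hG1 : (1:ℝ) ≤ ‖G‖ := by
    rw [hG_def, norm_neg, hnorm_smul]
    calc (1:ℝ) = t⁻¹ * t := (inv_mul_cancel₀ ht_pos.ne').symm
      _ ≤ t⁻¹ * ‖f‖ := mul_le_mul_of_nonneg_left (min_le_left _ _) ht_inv_pos.le
  have hFnull : WeakStarNull Fn := by
    intro v
    simp only [hFn_def, ContinuousLinearMap.smul_apply, ContinuousLinearMap.zero_apply]
    simpa using (hgnull v).const_mul t⁻¹
  have hFn_norm : ∀ n, ‖Fn n‖ = t⁻¹ * ‖g n‖ := fun n => hnorm_smul _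
  have h1lim : 1 ≤ Filter.liminf (fun n => ‖Fn n‖) atTop := by
    have heq : Filter.liminf (fun n => ‖Fn n‖) atTop
        = t⁻¹ * Filter.liminf (fun n => ‖g n‖) atTop := by
      simp only [hFn_norm]
      exact my_liminf_const_mul _ t⁻¹ 2 ht_inv_pos.le (fun n => norm_nonneg _) hg2
    rw [heq]
    calc (1:ℝ) = t⁻¹ * t := (inv_mul_cancel₀ ht_pos.ne').symm
      _ ≤ t⁻¹ * Filter.liminf (fun n => ‖g n‖) atTop :=
        mul_le_mul_of_nonneg_left (le_trans (min_le_right _ _) hliminf_g) ht_inv_pos.le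
  have hsub : ∀ n, Fn n - G = t⁻¹ • f' n := by
    intro n
    rw [hFn_def, hG_def, sub_neg_eq_add, ← smul_add, hg_def]
    congr 1
    simp
  have hle : Filter.liminf (fun n => ‖Fn n - G‖) atTop ≤ t⁻¹ := by
    refine liminf_le_of_frequently_le (Frequently.of_forall fun n => ?_)
      (myBddGe _ 0 fun n => norm_nonneg _)
    rw [hsub n, hnorm_smul]
    calc t⁻¹ * ‖f' n‖ ≤ t⁻¹ * 1 := mul_le_mul_of_nonneg_left (hf'1 n) ht_inv_pos.le
      _ = t⁻¹ := mul_one _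
  have hρ_le : ρ ≤ Filter.liminf (fun n => ‖Fn n - G‖) atTop - 1 := by
    rw [hρ_def, opialModulusStar]
    exact csInf_le ⟨0, opial_set_nonneg⟩ ⟨Fn, G, hG1, hFnull, h1lim, rfl⟩
  have h1ρt : 1 + ρ ≤ t⁻¹ := by linarith
  have ht_le : t ≤ 1 / (1 + ρ) := by
    rw [le_div_iff₀ h1ρ]
    calc t * (1 + ρ) ≤ t * t⁻¹ := mul_le_mul_of_nonneg_left h1ρt ht_pos.le
      _ = 1 := mul_inv_cancel₀ ht_pos.ne'
  have hA't : A' ≤ 1 + t := by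
    have h1 : A' - 1 ≤ ‖f‖ := by linarith
    have h2 : A' - 1 ≤ D := by rw [hD_def]; linarith
    have := le_min h1 h2
    rw [← ht_def] at this
    linarith
  linarith

end Main

theorem stmt1 (X : Type*) [NormedAddCommGroup X] [NormedSpace ℝ X] [CompleteSpace X]
    [TopologicalSpace.SeparableSpace X] :
    RCoef X ≤ 1 + 1 / (1 + opialModulusStar X 1) := by
  have hρ0 : 0 ≤ opialModulusStar X 1 := Real.sInf_nonneg opial_set_nonneg
  have h1ρ : (0:ℝ) < 1 + opialModulusStar X 1 := by linarith
  refine Real.sSup_le ?_ (by positivity)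
  rintro r ⟨x, y, hx1, hxw, hy, rfl⟩
  exact key_bound x y hx1 hxw hy
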